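/- Let n ≥ 2, 0 < δ < 1, C₂ ≥ 1, Q > 1, 0 < v ≤ 1, and let ξ₀, …, ξ_n be positive reals with 0 < ξ₀ ≤ ξ₁ ≤ ⋯ ≤ ξ_n = 1, ∏_{i=0}^{n} ξ_i = Q^{−(n+1)}, and ξ₀ ≤ Q^{−1−v}. Fix i' ∈ {0, …, n} and define δ_i := δ^{2(n+1)} C₂^{−(n+1)} if i = i' and δ_i := 1 otherwise. Then for every 1 ≤ k ≤ n, ∏_{i=0}^{k−1} ( δ² / (Q δ_i ξ_i) ) ≥ Q^{v} δ^{4n+2} C₂^{−2n−2}. (Here δ²/(Q δ_i ξ_i) = d|g_i|_p for |g_i|_p = δ/(δ_i ξ_i) and d = δ/Q.) -/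

import Mathlib

/-- Let `n ≥ 2`, `0 < δ < 1`, `C₂ ≥ 1`, `Q > 1`, `0 < v ≤ 1`, and let
`ξ₀, …, ξ_n` be positive reals with `ξ₀ ≤ ⋯ ≤ ξ_n = 1`, `∏ ξ_i = Q^{−(n+1)}` and
`ξ₀ ≤ Q^{−1−v}`. Fix `i' ∈ {0, …, n}` and define `δ_i := δ^{2(n+1)} C₂^{−(n+1)}` if `i = i'`
and `δ_i := 1` otherwise. Then for every `1 ≤ k ≤ n`,
`∏_{i=0}^{k−1} (δ² / (Q δ_i ξ_i)) ≥ Q^v δ^{4n+2} C₂^{−2n−2}`. -/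
theorem stmt11 (n : ℕ) (hn : 2 ≤ n) (δ C₂ Q v : ℝ) (hδ0 : 0 < δ) (hδ1 : δ < 1)
    (hC₂ : 1 ≤ C₂) (hQ : 1 < Q) (hv0 : 0 < v) (hv1 : v ≤ 1)
    (ξ : ℕ → ℝ) (hpos : 0 < ξ 0)
    (hmono : ∀ i < n, ξ i ≤ ξ (i + 1)) (hlast : ξ n = 1)
    (hprod : ∏ i ∈ Finset.range (n + 1), ξ i = Q ^ (-((n : ℝ) + 1)))
    (hfirst : ξ 0 ≤ Q ^ (-(1 + v)))
    (i' : ℕ) (hi' : i' ≤ n) (δi : ℕ → ℝ)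
    (hδi : ∀ i, δi i = if i = i' then δ ^ (2 * (n + 1)) * C₂ ^ (-((n : ℤ) + 1)) else 1) :
    ∀ k, 1 ≤ k → k ≤ n →
      Q ^ v * δ ^ (4 * n + 2) * C₂ ^ (-(2 * (n : ℤ) + 2)) ≤
        ∏ i ∈ Finset.range k, (δ ^ 2 / (Q * δi i * ξ i)) := by
  intro k hk1 hkn
  have hQ0 : (0:ℝ) < Q := lt_trans one_pos hQ
  have hchain : ∀ i j, i ≤ j → j ≤ n → ξ i ≤ ξ j := by
    intro i j hij hjn
    induction j with
    | zero => simp [Nat.le_zero.mp hij]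
    | succ m ih =>
      rcases Nat.eq_or_lt_of_le hij with h | h
      · exact h ▸ le_rfl
      · exact le_trans (ih (Nat.lt_succ_iff.mp h) (by omega)) (hmono m (by omega))
  have hpos' : ∀ i, i ≤ n → 0 < ξ i :=
    fun i hi => lt_of_lt_of_le hpos (hchain 0 i (Nat.zero_le _) hi)
  have hle1 : ∀ i, i ≤ n → ξ i ≤ 1 := fun i hi => hlast ▸ hchain i n hi le_rfl
  have ht0 : 0 < ξ (k-1) := hpos' _ (by omega)
  have ht1 : ξ (k-1) ≤ 1 := hle1 _ (by omega)
  have hPpos : 0 < ∏ i ∈ Finset.range k, ξ i :=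
    Finset.prod_pos (fun i hi => hpos' i (by simp at hi; omega))
  -- Step A
  have hA : ∏ i ∈ Finset.range k, ξ i ≤ ξ 0 * ξ (k-1) ^ (k-1) := by
    obtain ⟨m, rfl⟩ : ∃ m, k = m + 1 := ⟨k-1, by omega⟩
    rw [Finset.prod_range_succ']
    simp only [Nat.add_sub_cancel]
    have h1 : ∏ i ∈ Finset.range m, ξ (i+1) ≤ ξ m ^ m := by
      calc ∏ i ∈ Finset.range m, ξ (i+1)
          ≤ ∏ _i ∈ Finset.range m, ξ m := by
            refine Finset.prod_le_prod (fun i hi => (hpos' _ (by simp at hi; omega)).le) ?_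
            intro i hi
            simp only [Finset.mem_range] at hi
            exact hchain (i+1) m (by omega) (by omega)
        _ = ξ m ^ m := by rw [Finset.prod_const, Finset.card_range]
    calc (∏ i ∈ Finset.range m, ξ (i+1)) * ξ 0 ≤ ξ m ^ m * ξ 0 :=
          mul_le_mul_of_nonneg_right h1 hpos.le
      _ = ξ 0 * ξ m ^ m := mul_comm _ _
  -- Step C
  have hC : (∏ i ∈ Finset.range k, ξ i) * ξ (k-1) ^ (n - k) ≤ Q ^ (-((n:ℝ)+1)) := by
    have h1 : (∏ i ∈ Finset.range k, ξ i) * (∏ i ∈ Finset.Ico k n, ξ i)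
        = ∏ i ∈ Finset.range n, ξ i := by
      rw [Finset.range_eq_Ico, Finset.range_eq_Ico]
      exact Finset.prod_Ico_consecutive ξ (Nat.zero_le k) hkn
    have h2 : ∏ i ∈ Finset.range n, ξ i = Q ^ (-((n:ℝ)+1)) := by
      have := Finset.prod_range_succ ξ n
      rw [hprod, hlast, mul_one] at this
      exact this.symm
    have h3 : ξ (k-1) ^ (n-k) ≤ ∏ i ∈ Finset.Ico k n, ξ i := by
      calc ξ (k-1) ^ (n-k) = ∏ _i ∈ Finset.Ico k n, ξ (k-1) := by
            rw [Finset.prod_const, Nat.card_Ico]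
        _ ≤ ∏ i ∈ Finset.Ico k n, ξ i := by
            refine Finset.prod_le_prod (fun _ _ => ht0.le) ?_
            intro i hi
            simp only [Finset.mem_Ico] at hi
            exact hchain (k-1) i (by omega) (by omega)
    calc (∏ i ∈ Finset.range k, ξ i) * ξ (k-1) ^ (n - k)
        ≤ (∏ i ∈ Finset.range k, ξ i) * ∏ i ∈ Finset.Ico k n, ξ i :=
          mul_le_mul_of_nonneg_left h3 hPpos.le
      _ = Q ^ (-((n:ℝ)+1)) := by rw [h1, h2]
  -- Step D
  have hA' : ∏ i ∈ Finset.range k, ξ i ≤ Q ^ (-(1+v)) * ξ (k-1) ^ (k-1) :=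
    le_trans hA (mul_le_mul_of_nonneg_right hfirst (pow_nonneg ht0.le _))
  have hD1 : (∏ i ∈ Finset.range k, ξ i) ^ (n-k)
      ≤ (Q ^ (-(1+v))) ^ (n-k) * ξ (k-1) ^ ((k-1)*(n-k)) := by
    calc (∏ i ∈ Finset.range k, ξ i) ^ (n-k)
        ≤ (Q ^ (-(1+v)) * ξ (k-1) ^ (k-1)) ^ (n-k) := pow_le_pow_left₀ hPpos.le hA' _
      _ = (Q ^ (-(1+v))) ^ (n-k) * ξ (k-1) ^ ((k-1)*(n-k)) := by rw [mul_pow, ← pow_mul]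
  have hD2 : (∏ i ∈ Finset.range k, ξ i) ^ (k-1) * ξ (k-1) ^ ((n-k)*(k-1))
      ≤ (Q ^ (-((n:ℝ)+1))) ^ (k-1) := by
    calc (∏ i ∈ Finset.range k, ξ i) ^ (k-1) * ξ (k-1) ^ ((n-k)*(k-1))
        = ((∏ i ∈ Finset.range k, ξ i) * ξ (k-1) ^ (n-k)) ^ (k-1) := by
          rw [mul_pow, ← pow_mul]
      _ ≤ (Q ^ (-((n:ℝ)+1))) ^ (k-1) :=
          pow_le_pow_left₀ (by positivity) hC _
  have hD : (∏ i ∈ Finset.range k, ξ i) ^ (n-1)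
      ≤ (Q ^ (-(1+v))) ^ (n-k) * (Q ^ (-((n:ℝ)+1))) ^ (k-1) := by
    have hmul := mul_le_mul hD1 hD2 (by positivity) (by positivity)
    have hl : (∏ i ∈ Finset.range k, ξ i) ^ (n-k)
        * ((∏ i ∈ Finset.range k, ξ i) ^ (k-1) * ξ (k-1) ^ ((n-k)*(k-1)))
        = (∏ i ∈ Finset.range k, ξ i) ^ (n-1) * ξ (k-1) ^ ((n-k)*(k-1)) := by
      rw [← mul_assoc, ← pow_add]
      congr 2
      omega
    have hr : (Q ^ (-(1+v))) ^ (n-k) * ξ (k-1) ^ ((k-1)*(n-k)) * (Q ^ (-((n:ℝ)+1))) ^ (k-1)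
        = ((Q ^ (-(1+v))) ^ (n-k) * (Q ^ (-((n:ℝ)+1))) ^ (k-1)) * ξ (k-1) ^ ((n-k)*(k-1)) := by
      ring_nf
    rw [hl, hr] at hmul
    exact le_of_mul_le_mul_right hmul (by positivity)
  have hexp : (Q ^ (-(1+v))) ^ (n-k) * (Q ^ (-((n:ℝ)+1))) ^ (k-1)
      ≤ (Q ^ (-((k:ℝ)+v))) ^ (n-1) := by
    rw [← Real.rpow_natCast (Q ^ (-(1+v))) (n-k), ← Real.rpow_natCast (Q ^ (-((n:ℝ)+1))) (k-1),
      ← Real.rpow_natCast (Q ^ (-((k:ℝ)+v))) (n-1),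
      ← Real.rpow_mul hQ0.le, ← Real.rpow_mul hQ0.le, ← Real.rpow_mul hQ0.le,
      ← Real.rpow_add hQ0]
    apply Real.rpow_le_rpow_left_iff hQ |>.mpr
    have c1 : ((n - k : ℕ) : ℝ) = (n : ℝ) - k := by
      rw [Nat.cast_sub hkn]
    have c2 : ((k - 1 : ℕ) : ℝ) = (k : ℝ) - 1 := by
      rw [Nat.cast_sub hk1]; simp
    have c3 : ((n - 1 : ℕ) : ℝ) = (n : ℝ) - 1 := by
      rw [Nat.cast_sub (by omega)]; simp
    rw [c1, c2, c3]
    have hk1' : (1:ℝ) ≤ k := by exact_mod_cast hk1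
    have hkn' : (k:ℝ) ≤ n := by exact_mod_cast hkn
    nlinarith [mul_nonneg (sub_nonneg.mpr hv1) (sub_nonneg.mpr hk1')]
  have hPle : ∏ i ∈ Finset.range k, ξ i ≤ Q ^ (-((k:ℝ)+v)) := by
    refine le_of_pow_le_pow_left₀ (by omega) (Real.rpow_pos_of_pos hQ0 _).le
      (le_trans hD hexp)
  -- Step E
  have hδipos : ∀ i, 0 < δi i := by
    intro i; rw [hδi]; split
    · positivity
    · exact one_pos
  have hδile : ∀ i, δi i ≤ 1 := by
    intro i; rw [hδi]; split
    · have h1 : δ ^ (2*(n+1)) ≤ 1 := pow_le_one₀ hδ0.le hδ1.le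
      have h2 : C₂ ^ (-((n:ℤ)+1)) ≤ 1 := by
        rw [zpow_neg]
        exact inv_le_one_of_one_le₀ (one_le_zpow₀ hC₂ (by omega))
      have h3 : (0:ℝ) ≤ C₂ ^ (-((n:ℤ)+1)) := by positivity
      nlinarith
    · exact le_rfl
  have hDpos : 0 < ∏ i ∈ Finset.range k, δi i := Finset.prod_pos fun i _ => hδipos i
  have hDle : ∏ i ∈ Finset.range k, δi i ≤ 1 :=
    Finset.prod_le_one (fun i _ => (hδipos i).le) (fun i _ => hδile i)
  have hprodeq : ∏ i ∈ Finset.range k, (δ ^ 2 / (Q * δi i * ξ i))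
      = δ ^ (2*k) / (Q ^ k * (∏ i ∈ Finset.range k, δi i) * ∏ i ∈ Finset.range k, ξ i) := by
    rw [Finset.prod_div_distrib, Finset.prod_mul_distrib, Finset.prod_mul_distrib,
      Finset.prod_const, Finset.prod_const, Finset.card_range, ← pow_mul]
  have hden : Q ^ k * (∏ i ∈ Finset.range k, δi i) * (∏ i ∈ Finset.range k, ξ i)
      ≤ Q ^ (-v) := by
    have h1 : Q ^ k * (∏ i ∈ Finset.range k, δi i) * (∏ i ∈ Finset.range k, ξ i)
        ≤ Q ^ k * Q ^ (-((k:ℝ)+v)) := by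
      calc Q ^ k * (∏ i ∈ Finset.range k, δi i) * (∏ i ∈ Finset.range k, ξ i)
          ≤ Q ^ k * 1 * (∏ i ∈ Finset.range k, ξ i) := by
            apply mul_le_mul_of_nonneg_right _ hPpos.le
            exact mul_le_mul_of_nonneg_left hDle (by positivity)
        _ = Q ^ k * (∏ i ∈ Finset.range k, ξ i) := by ring
        _ ≤ Q ^ k * Q ^ (-((k:ℝ)+v)) :=
            mul_le_mul_of_nonneg_left hPle (by positivity)
    refine le_trans h1 ?_
    rw [← Real.rpow_natCast Q k, ← Real.rpow_add hQ0]
    apply le_of_eq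
    congr 1
    ring
  have hQv : (0:ℝ) < Q ^ v := Real.rpow_pos_of_pos hQ0 _
  have hfin : δ ^ (2*k) * Q ^ v ≤ δ ^ (2*k) / (Q ^ k * (∏ i ∈ Finset.range k, δi i)
      * ∏ i ∈ Finset.range k, ξ i) := by
    have hdpos : 0 < Q ^ k * (∏ i ∈ Finset.range k, δi i) * ∏ i ∈ Finset.range k, ξ i := by
      positivity
    have := div_le_div_of_nonneg_left (pow_nonneg hδ0.le (2*k)) hdpos hden
    calc δ ^ (2*k) * Q ^ v = δ ^ (2*k) / Q ^ (-v) := by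
          rw [Real.rpow_neg hQ0.le, div_eq_mul_inv, inv_inv]
      _ ≤ _ := this
  rw [hprodeq]
  refine le_trans ?_ hfin
  have hc2 : C₂ ^ (-(2 * (n:ℤ) + 2)) ≤ 1 := by
    rw [show -(2 * (n:ℤ) + 2) = -(2 * (n:ℤ) + 2) from rfl, ← neg_neg (2 * (n:ℤ) + 2)]
    rw [zpow_neg]
    exact inv_le_one_of_one_le₀ (one_le_zpow₀ hC₂ (by omega))
  have hc2pos : (0:ℝ) < C₂ ^ (-(2 * (n:ℤ) + 2)) := by positivity
  have hδle : δ ^ (4*n+2) ≤ δ ^ (2*k) :=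
    pow_le_pow_of_le_one hδ0.le hδ1.le (by omega)
  calc Q ^ v * δ ^ (4 * n + 2) * C₂ ^ (-(2 * (n : ℤ) + 2))
      ≤ Q ^ v * δ ^ (4 * n + 2) * 1 := by
        exact mul_le_mul_of_nonneg_left hc2 (mul_nonneg hQv.le (by positivity))
    _ = δ ^ (4*n+2) * Q ^ v := by ring
    _ ≤ δ ^ (2*k) * Q ^ v := mul_le_mul_of_nonneg_right hδle hQv.le
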